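/- Let K_{1,n−1} be the star graph on n ≥ 3 vertices with hub vertex 1, adjacency matrix A, and cos θ_{pq} = (e^A)_{pq}/√((e^A)_{pp}(e^A)_{qq}). Then for every leaf q ≠ 1: cos² θ_{1q} = tanh²(√(n−1)) / ( (n−2)·sech(√(n−1)) + 1 ); and for every pair of distinct leaves p ≠ 1, q ≠ 1: cos θ_{pq} = (cosh(√(n−1)) − 1) / (cosh(√(n−1)) + n − 2). -/

import Mathlib

open Matrix

/-- The adjacency matrix of the star graph `K_{1,n−1}` on vertex set `{1, …, n}` (vertex `p`
is represented by the index `p - 1 : Fin n`): the hub, vertex `1` (index `0`), is adjacent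
to every other vertex and there are no other edges. -/
def starAdj (n : ℕ) : Matrix (Fin n) (Fin n) ℝ :=
  Matrix.of fun p q => if (p.1 = 0 ∧ q.1 ≠ 0) ∨ (q.1 = 0 ∧ p.1 ≠ 0) then 1 else 0

lemma card_ne_zero (n : ℕ) (hn : 0 < n) :
    (Finset.univ.filter (fun r : Fin n => r.1 ≠ 0)).card = n - 1 := by
  have : (Finset.univ.filter (fun r : Fin n => r.1 = 0)) = {(⟨0, hn⟩ : Fin n)} := by
    ext r; simp [Fin.ext_iff]
  rw [Finset.filter_not, Finset.card_sdiff_of_subset (Finset.filter_subset _ _), this]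
  simp

lemma starAdj_sq (n : ℕ) (hn : 3 ≤ n) (p q : Fin n) :
    (starAdj n ^ 2) p q
      = if p.1 = 0 ∧ q.1 = 0 then ((n : ℝ) - 1)
        else if p.1 ≠ 0 ∧ q.1 ≠ 0 then 1 else 0 := by
  have hn0 : 0 < n := by omega
  rw [pow_two, Matrix.mul_apply]
  rcases eq_or_ne p.1 0 with hp | hp <;> rcases eq_or_ne q.1 0 with hq | hq
  · simp only [starAdj, Matrix.of_apply, hp, hq]
    have hsum : ∑ r : Fin n, ((if (0:ℕ) = 0 ∧ r.1 ≠ 0 ∨ r.1 = 0 ∧ (0:ℕ) ≠ 0 then (1:ℝ) else 0)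
        * (if r.1 = 0 ∧ (0:ℕ) ≠ 0 ∨ (0:ℕ) = 0 ∧ r.1 ≠ 0 then (1:ℝ) else 0))
        = ∑ r : Fin n, (if r.1 ≠ 0 then (1:ℝ) else 0) :=
      Finset.sum_congr rfl (fun r _ => by by_cases hr : r.1 = 0 <;> simp [hr])
    simp only [hp, hq] at hsum ⊢
    rw [hsum, Finset.sum_boole, card_ne_zero n hn0]
    rw [Nat.cast_sub (by omega : 1 ≤ n)]
    simp [hp, hq]
  · simp only [starAdj, Matrix.of_apply, hp, hq]
    rw [Finset.sum_eq_zero (fun r _ => by by_cases hr : r.1 = 0 <;> simp [hr, hq])]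
    simp [hp, hq]
  · simp only [starAdj, Matrix.of_apply, hp, hq]
    rw [Finset.sum_eq_zero (fun r _ => by by_cases hr : r.1 = 0 <;> simp [hr, hp])]
    simp [hp, hq]
  · simp only [starAdj, Matrix.of_apply]
    rw [Finset.sum_eq_single (⟨0, hn0⟩ : Fin n)]
    · simp [hp, hq]
    · intro r _ hr
      have : r.1 ≠ 0 := fun h => hr (Fin.ext h)
      simp [this, hp, hq]
    · simp

lemma starAdj_cube (n : ℕ) (hn : 3 ≤ n) :
    starAdj n ^ 2 * starAdj n = ((n : ℝ) - 1) • starAdj n := by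
  have hn0 : 0 < n := by omega
  ext p q
  rw [Matrix.mul_apply]
  rcases eq_or_ne p.1 0 with hp | hp <;> rcases eq_or_ne q.1 0 with hq | hq
  · rw [Finset.sum_eq_zero (fun r _ => by
      rcases eq_or_ne r.1 0 with hr | hr
      · simp [starAdj, hr, hq]
      · simp [starAdj_sq n hn, hp, hr])]
    simp [starAdj, hp, hq]
  · rw [Finset.sum_eq_single (⟨0, hn0⟩ : Fin n)]
    · rw [starAdj_sq n hn]
      simp [starAdj, hp, hq]
    · intro r _ hr
      have hr' : r.1 ≠ 0 := fun h => hr (Fin.ext h)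
      simp [starAdj, hr', hq]
    · simp
  · have hsum : ∑ r : Fin n, (starAdj n ^ 2) p r * starAdj n r q
        = ∑ r : Fin n, (if r.1 ≠ 0 then (1:ℝ) else 0) :=
      Finset.sum_congr rfl (fun r _ => by
        rw [starAdj_sq n hn]
        rcases eq_or_ne r.1 0 with hr | hr
        · simp [starAdj, hr, hp]
        · simp [starAdj, hr, hp, hq])
    rw [hsum, Finset.sum_boole, card_ne_zero n hn0]
    rw [Nat.cast_sub (by omega : 1 ≤ n)]
    simp [starAdj, hp, hq]
  · rw [Finset.sum_eq_zero (fun r _ => by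
      rcases eq_or_ne r.1 0 with hr | hr
      · rw [starAdj_sq n hn]; simp [hp, hr]
      · simp [starAdj, hr, hq])]
    simp [starAdj, hp, hq]

lemma starAdj_pow (n : ℕ) (hn : 3 ≤ n) (k : ℕ) :
    starAdj n ^ (2 * k + 1) = ((n : ℝ) - 1) ^ k • starAdj n ∧
    starAdj n ^ (2 * k + 2) = ((n : ℝ) - 1) ^ k • starAdj n ^ 2 := by
  induction k with
  | zero => simp
  | succ k ih =>
    obtain ⟨h1, h2⟩ := ih
    have hodd : starAdj n ^ (2 * (k + 1) + 1) = ((n : ℝ) - 1) ^ (k + 1) • starAdj n := by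
      have : 2 * (k + 1) + 1 = (2 * k + 2) + 1 := by ring
      rw [this, pow_succ, h2, Matrix.smul_mul, starAdj_cube n hn, smul_smul, pow_succ]
    refine ⟨hodd, ?_⟩
    have : 2 * (k + 1) + 2 = (2 * (k + 1) + 1) + 1 := by ring
    rw [this, pow_succ, hodd, Matrix.smul_mul, pow_two]

open NormedSpace in
lemma exp_entry_hasSum {N : ℕ} (A : Matrix (Fin N) (Fin N) ℝ) (p q : Fin N) :
    HasSum (fun k : ℕ => ((k.factorial : ℝ))⁻¹ * (A ^ k) p q) (exp A p q) := by
  letI : SeminormedRing (Matrix (Fin N) (Fin N) ℝ) := Matrix.linftyOpSemiNormedRing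
  letI : NormedRing (Matrix (Fin N) (Fin N) ℝ) := Matrix.linftyOpNormedRing
  letI : NormedAlgebra ℝ (Matrix (Fin N) (Fin N) ℝ) := Matrix.linftyOpNormedAlgebra
  have h : HasSum (fun k : ℕ => (k.factorial : ℝ)⁻¹ • A ^ k) (exp A) :=
    exp_series_hasSum_exp' A
  have h2 := h.map (Matrix.entryLinearMap ℝ ℝ p q)
    (by exact Continuous.matrix_elem continuous_id p q)
  exact h2

lemma c_pos (n : ℕ) (hn : 3 ≤ n) : 0 < ((n : ℝ) - 1) := by
  have : (3 : ℝ) ≤ n := by exact_mod_cast hn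
  linarith

lemma s_sq (n : ℕ) (hn : 3 ≤ n) : Real.sqrt ((n : ℝ) - 1) ^ 2 = (n : ℝ) - 1 :=
  Real.sq_sqrt (le_of_lt (c_pos n hn))

lemma s_pos (n : ℕ) (hn : 3 ≤ n) : 0 < Real.sqrt ((n : ℝ) - 1) :=
  Real.sqrt_pos.2 (c_pos n hn)

lemma s_pow_even (n : ℕ) (hn : 3 ≤ n) (k : ℕ) :
    Real.sqrt ((n : ℝ) - 1) ^ (2 * k) = ((n : ℝ) - 1) ^ k := by
  rw [pow_mul, s_sq n hn]

lemma exp_hub_hub (n : ℕ) (hn : 3 ≤ n) (p q : Fin n) (hp : p.1 = 0) (hq : q.1 = 0) :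
    NormedSpace.exp (starAdj n) p q = Real.cosh (Real.sqrt ((n : ℝ) - 1)) := by
  have hpq : p = q := Fin.ext (hp.trans hq.symm)
  refine (exp_entry_hasSum (starAdj n) p q).unique ?_
  have heven : HasSum (fun k : ℕ => (((2 * k).factorial : ℝ))⁻¹ * ((starAdj n ^ (2 * k)) p q))
      (Real.cosh (Real.sqrt ((n : ℝ) - 1))) := by
    have hfun : ∀ k : ℕ, (((2 * k).factorial : ℝ))⁻¹ * ((starAdj n ^ (2 * k)) p q)
        = Real.sqrt ((n : ℝ) - 1) ^ (2 * k) / ((2 * k).factorial : ℝ) := by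
      intro k
      rw [s_pow_even n hn]
      cases k with
      | zero => simp [hpq]
      | succ k =>
        have h2 : 2 * (k + 1) = 2 * k + 2 := by ring
        rw [h2, (starAdj_pow n hn k).2]
        simp only [Matrix.smul_apply, smul_eq_mul]
        rw [starAdj_sq n hn, if_pos ⟨hp, hq⟩, pow_succ]
        ring
    simp only [hfun]
    exact Real.hasSum_cosh _
  have hodd : HasSum (fun k : ℕ => (((2 * k + 1).factorial : ℝ))⁻¹
      * ((starAdj n ^ (2 * k + 1)) p q)) 0 := by
    have hfun : ∀ k : ℕ, (((2 * k + 1).factorial : ℝ))⁻¹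
        * ((starAdj n ^ (2 * k + 1)) p q) = (0 : ℝ) := by
      intro k
      rw [(starAdj_pow n hn k).1]
      simp [starAdj, hp, hq]
    simp only [hfun]
    exact hasSum_zero
  simpa using HasSum.even_add_odd
    (f := fun k : ℕ => ((k.factorial : ℝ))⁻¹ * ((starAdj n ^ k) p q)) heven hodd

lemma exp_hub_leaf (n : ℕ) (hn : 3 ≤ n) (p q : Fin n) (hp : p.1 = 0) (hq : q.1 ≠ 0) :
    NormedSpace.exp (starAdj n) p q
      = Real.sinh (Real.sqrt ((n : ℝ) - 1)) / Real.sqrt ((n : ℝ) - 1) := by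
  have hpq : p ≠ q := fun h => hq (h ▸ hp)
  have hs0 : Real.sqrt ((n : ℝ) - 1) ≠ 0 := ne_of_gt (s_pos n hn)
  refine (exp_entry_hasSum (starAdj n) p q).unique ?_
  have heven : HasSum (fun k : ℕ => (((2 * k).factorial : ℝ))⁻¹ * ((starAdj n ^ (2 * k)) p q))
      0 := by
    have hfun : ∀ k : ℕ, (((2 * k).factorial : ℝ))⁻¹ * ((starAdj n ^ (2 * k)) p q) = (0:ℝ) := by
      intro k
      cases k with
      | zero => simp [Matrix.one_apply_ne hpq]
      | succ k =>
        have h2 : 2 * (k + 1) = 2 * k + 2 := by ring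
        rw [h2, (starAdj_pow n hn k).2]
        simp only [Matrix.smul_apply, smul_eq_mul]
        rw [starAdj_sq n hn]
        have h1 : ¬(p.1 = 0 ∧ q.1 = 0) := fun h => hq h.2
        have h3 : ¬(p.1 ≠ 0 ∧ q.1 ≠ 0) := fun h => h.1 hp
        rw [if_neg h1, if_neg h3]
        ring
    simp only [hfun]
    exact hasSum_zero
  have hodd : HasSum (fun k : ℕ => (((2 * k + 1).factorial : ℝ))⁻¹
      * ((starAdj n ^ (2 * k + 1)) p q))
      (Real.sinh (Real.sqrt ((n : ℝ) - 1)) / Real.sqrt ((n : ℝ) - 1)) := by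
    have hfun : ∀ k : ℕ, (((2 * k + 1).factorial : ℝ))⁻¹
        * ((starAdj n ^ (2 * k + 1)) p q)
        = Real.sqrt ((n : ℝ) - 1) ^ (2 * k + 1) / ((2 * k + 1).factorial : ℝ)
          / Real.sqrt ((n : ℝ) - 1) := by
      intro k
      rw [(starAdj_pow n hn k).1]
      simp only [Matrix.smul_apply, smul_eq_mul]
      have hA : starAdj n p q = 1 := by simp [starAdj, hp, hq]
      rw [hA, pow_succ, s_pow_even n hn]
      field_simp
    simp only [hfun]
    exact (Real.hasSum_sinh _).div_const _
  simpa using HasSum.even_add_odd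
    (f := fun k : ℕ => ((k.factorial : ℝ))⁻¹ * ((starAdj n ^ k) p q)) heven hodd

lemma exp_leaf_leaf (n : ℕ) (hn : 3 ≤ n) (p q : Fin n) (hp : p.1 ≠ 0) (hq : q.1 ≠ 0) :
    NormedSpace.exp (starAdj n) p q
      = (if p = q then (1:ℝ) else 0)
        + (Real.cosh (Real.sqrt ((n : ℝ) - 1)) - 1) / ((n : ℝ) - 1) := by
  have hc : ((n : ℝ) - 1) ≠ 0 := ne_of_gt (c_pos n hn)
  refine (exp_entry_hasSum (starAdj n) p q).unique ?_
  have hfun : ∀ k : ℕ, (((2 * (k + 1)).factorial : ℝ))⁻¹ * ((starAdj n ^ (2 * (k + 1))) p q)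
      = Real.sqrt ((n : ℝ) - 1) ^ (2 * (k + 1)) / (((2 * (k + 1)).factorial : ℝ))
        / ((n : ℝ) - 1) := by
    intro k
    rw [s_pow_even n hn]
    have h2 : 2 * (k + 1) = 2 * k + 2 := by ring
    rw [h2, (starAdj_pow n hn k).2]
    simp only [Matrix.smul_apply, smul_eq_mul]
    rw [starAdj_sq n hn]
    have h1 : ¬(p.1 = 0 ∧ q.1 = 0) := fun h => hp h.1
    rw [if_neg h1, if_pos ⟨hp, hq⟩, pow_succ]
    field_simp
  have heven : HasSum (fun k : ℕ => (((2 * k).factorial : ℝ))⁻¹ * ((starAdj n ^ (2 * k)) p q))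
      ((if p = q then (1:ℝ) else 0)
        + (Real.cosh (Real.sqrt ((n : ℝ) - 1)) - 1) / ((n : ℝ) - 1)) := by
    have htail : HasSum (fun k : ℕ =>
        Real.sqrt ((n : ℝ) - 1) ^ (2 * (k + 1)) / (((2 * (k + 1)).factorial : ℝ)))
        (Real.cosh (Real.sqrt ((n : ℝ) - 1)) - 1) := by
      have := (hasSum_nat_add_iff'
        (f := fun k : ℕ => Real.sqrt ((n : ℝ) - 1) ^ (2 * k) / (((2 * k).factorial : ℝ))) 1).2
        (Real.hasSum_cosh (Real.sqrt ((n : ℝ) - 1)))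
      simpa using this
    have hshift : HasSum (fun k : ℕ => (((2 * (k + 1)).factorial : ℝ))⁻¹
        * ((starAdj n ^ (2 * (k + 1))) p q))
        ((Real.cosh (Real.sqrt ((n : ℝ) - 1)) - 1) / ((n : ℝ) - 1)) := by
      simp only [hfun]
      exact htail.div_const _
    have h0 := HasSum.zero_add
      (f := fun k : ℕ => (((2 * k).factorial : ℝ))⁻¹ * ((starAdj n ^ (2 * k)) p q)) hshift
    have hzero : (((2 * 0).factorial : ℝ))⁻¹ * ((starAdj n ^ (2 * 0)) p q)
        = (if p = q then (1:ℝ) else 0) := by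
      rcases eq_or_ne p q with h | h <;> simp [h, Matrix.one_apply_ne]
    simpa only [hzero] using h0
  have hodd : HasSum (fun k : ℕ => (((2 * k + 1).factorial : ℝ))⁻¹
      * ((starAdj n ^ (2 * k + 1)) p q)) 0 := by
    have hfun' : ∀ k : ℕ, (((2 * k + 1).factorial : ℝ))⁻¹
        * ((starAdj n ^ (2 * k + 1)) p q) = (0:ℝ) := by
      intro k
      rw [(starAdj_pow n hn k).1]
      simp [starAdj, hp, hq]
    simp only [hfun']
    exact hasSum_zero
  simpa using HasSum.even_add_odd
    (f := fun k : ℕ => ((k.factorial : ℝ))⁻¹ * ((starAdj n ^ k) p q)) heven hodd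


/-- The cosine of the communicability angle of the star graph `K_{1,n−1}`:
`cos θ_{pq} = G_{pq}/√(G_{pp} G_{qq})` with `G = e^A`. -/
noncomputable def starCos (n : ℕ) (p q : Fin n) : ℝ :=
  NormedSpace.exp (starAdj n) p q
    / Real.sqrt (NormedSpace.exp (starAdj n) p p * NormedSpace.exp (starAdj n) q q)

/-- For the star graph `K_{1,n−1}` on `n ≥ 3` vertices with hub vertex `1`
(index `0`): for every leaf `q`,
`cos² θ_{1q} = tanh²(√(n−1)) / ((n−2) sech(√(n−1)) + 1)`, and for distinct leaves `p, q`,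
`cos θ_{pq} = (cosh(√(n−1)) − 1)/(cosh(√(n−1)) + n − 2)`. -/
theorem star_graph_cos_angle (n : ℕ) (hn : 3 ≤ n) :
    (∀ p q : Fin n, p.1 = 0 → q.1 ≠ 0 →
      (starCos n p q) ^ 2
        = Real.tanh (Real.sqrt ((n : ℝ) - 1)) ^ 2
          / (((n : ℝ) - 2) * (1 / Real.cosh (Real.sqrt ((n : ℝ) - 1))) + 1)) ∧
    (∀ p q : Fin n, p.1 ≠ 0 → q.1 ≠ 0 → p ≠ q →
      starCos n p q
        = (Real.cosh (Real.sqrt ((n : ℝ) - 1)) - 1)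
          / (Real.cosh (Real.sqrt ((n : ℝ) - 1)) + (n : ℝ) - 2)) := by
  have hc : (0:ℝ) < (n : ℝ) - 1 := c_pos n hn
  have hn2 : (0:ℝ) ≤ (n : ℝ) - 2 := by
    have : (3:ℝ) ≤ n := by exact_mod_cast hn
    linarith
  set ch := Real.cosh (Real.sqrt ((n : ℝ) - 1)) with hch
  have hch1 : 1 ≤ ch := Real.one_le_cosh _
  have hch0 : 0 < ch := by linarith
  have hD : 0 < 1 + (ch - 1) / ((n : ℝ) - 1) := by
    have : 0 ≤ (ch - 1) / ((n : ℝ) - 1) := div_nonneg (by linarith) hc.le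
    linarith
  have hden : 0 < ch + (n : ℝ) - 2 := by linarith
  have hkey : 1 + (ch - 1) / ((n : ℝ) - 1) = (ch + (n : ℝ) - 2) / ((n : ℝ) - 1) := by
    field_simp
    ring
  constructor
  · intro p q hp hq
    rw [starCos, exp_hub_leaf n hn p q hp hq, exp_hub_hub n hn p p hp hp,
      exp_leaf_leaf n hn q q hq hq, if_pos rfl]
    rw [← hch, hkey]
    rw [div_pow, Real.sq_sqrt (by positivity), div_pow, s_sq n hn,
      Real.tanh_eq_sinh_div_cosh, div_pow, ← hch]
    have h1 : ((n:ℝ) - 2) * (1 / ch) + 1 ≠ 0 := by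
      have : 0 < ((n:ℝ) - 2) * (1 / ch) + 1 := by positivity
      exact ne_of_gt this
    field_simp
    ring
  · intro p q hp hq hpq
    rw [starCos, exp_leaf_leaf n hn p q hp hq, if_neg hpq,
      exp_leaf_leaf n hn p p hp hp, exp_leaf_leaf n hn q q hq hq]
    simp only [eq_self_iff_true, if_true]
    rw [← hch, zero_add, Real.sqrt_mul_self (le_of_lt hD), hkey]
    field_simp
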